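/- If a monic OPS (P_n) with P_n(z)=z^n+f_n z^{n-1}+… (f_n = −∑_{j=0}^{n−1} B_j) satisfies (az^2+bz+c)·D_q P_n = a_n S_q P_{n+1} + b_n S_q P_n + c_n S_q P_{n−1}, then comparing the coefficients of z^n yields α_n α_{n+1} b_n = γ_n(a α_n B_n + b α_{n+1}) + aα ∑_{j=0}^{n−1} B_j for all n≥0. -/

import Mathlib

open Polynomial Finset

noncomputable section

/-- The q-quadratic lattice variable: z = x(s) = (q^s + q^{-s})/2, with w = q^s. -/
def latX (w : ℂ) : ℂ := (w + w⁻¹) / 2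

/-- Askey-Wilson divided-difference operator, acting on functions of w = q^s,
    with r = q^{1/2}. -/
def Dq (r : ℂ) (u : ℂ → ℂ) (w : ℂ) : ℂ :=
  (u (r * w) - u (w / r)) / (latX (r * w) - latX (w / r))

/-- Averaging operator. -/
def Sq (r : ℂ) (u : ℂ → ℂ) (w : ℂ) : ℂ :=
  (u (r * w) + u (w / r)) / 2

/-- The function of w = q^s associated to a polynomial in z. -/
def pl (p : Polynomial ℂ) : ℂ → ℂ := fun w => p.eval (latX w)

/-- γ_n = (q^{n/2} - q^{-n/2})/(q^{1/2} - q^{-1/2}), with r = q^{1/2}. -/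
def gam (r : ℂ) (n : ℕ) : ℂ := (r ^ n - r⁻¹ ^ n) / (r - r⁻¹)

/-- α_n = (q^{n/2} + q^{-n/2})/2, with r = q^{1/2}. -/
def al (r : ℂ) (n : ℕ) : ℂ := (r ^ n + r⁻¹ ^ n) / 2

end

noncomputable section

def ChT : ℕ → Polynomial ℂ
  | 0 => 1
  | 1 => X
  | (k+2) => C 2 * X * ChT (k+1) - ChT k

def ChV : ℕ → Polynomial ℂ
  | 0 => 0
  | 1 => 1
  | (k+2) => C 2 * X * ChV (k+1) - ChV k

lemma ChT_ss (k : ℕ) : ChT (k+2) = C 2 * X * ChT (k+1) - ChT k := by rw [ChT]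
lemma ChV_ss (k : ℕ) : ChV (k+2) = C 2 * X * ChV (k+1) - ChV k := by rw [ChV]

lemma sub_inv_ne (w : ℂ) (hw : w ≠ 0) (hw2 : w^2 ≠ 1) : w - w⁻¹ ≠ 0 := by
  intro h
  apply hw2
  have h' := sub_eq_zero.mp h
  rw [sq]
  nth_rewrite 2 [h']
  exact mul_inv_cancel₀ hw

theorem ChT_eval : ∀ (k : ℕ) (w : ℂ), w ≠ 0 →
    (ChT k).eval (latX w) = (w^k + w⁻¹^k)/2
  | 0, w, hw => by simp [ChT]
  | 1, w, hw => by simp [ChT, latX]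
  | (k+2), w, hw => by
      have h1 := ChT_eval (k+1) w hw
      have h0 := ChT_eval k w hw
      rw [ChT_ss]
      simp only [eval_sub, eval_mul, eval_C, eval_X]
      rw [h1, h0]
      simp only [latX, pow_succ]
      generalize w ^ k = s
      generalize w⁻¹ ^ k = t
      field_simp
      ring

theorem ChV_eval : ∀ (k : ℕ) (w : ℂ), w ≠ 0 →
    (w - w⁻¹) * (ChV k).eval (latX w) = w^k - w⁻¹^k
  | 0, w, hw => by simp [ChV]
  | 1, w, hw => by simp [ChV]
  | (k+2), w, hw => by
      have hinv : w * w⁻¹ = 1 := mul_inv_cancel₀ hw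
      have h1 := ChV_eval (k+1) w hw
      have h0 := ChV_eval k w hw
      rw [ChV_ss]
      simp only [eval_sub, eval_mul, eval_C, eval_X]
      simp only [latX] at h1 h0 ⊢
      linear_combination (w + w⁻¹) * h1 - h0 + (w^k - w⁻¹^k) * hinv

theorem ChT_coeff_gt : ∀ (k j : ℕ), k < j → (ChT k).coeff j = 0
  | 0, j, h => by simp [ChT, coeff_one]; omega
  | 1, j, h => by simp [ChT, coeff_X]; omega
  | (k+2), j, h => by
      obtain ⟨j', rfl⟩ : ∃ j', j = j' + 1 := ⟨j - 1, by omega⟩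
      have h1 := ChT_coeff_gt (k+1) j' (by omega)
      have h0 := ChT_coeff_gt k (j'+1) (by omega)
      rw [ChT_ss]
      simp [coeff_sub, mul_assoc, coeff_C_mul, coeff_X_mul, h1, h0]

theorem ChT_coeff_self : ∀ (k : ℕ), (ChT (k+1)).coeff (k+1) = 2^k
  | 0 => by simp [ChT]
  | (k+1) => by
      have h1 := ChT_coeff_self k
      have h0 := ChT_coeff_gt k (k+2) (by omega)
      rw [ChT_ss]
      simp [coeff_sub, mul_assoc, coeff_C_mul, coeff_X_mul, h1, h0]
      ring

theorem ChT_coeff_pred : ∀ (k : ℕ), (ChT (k+1)).coeff k = 0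
  | 0 => by simp [ChT]
  | (k+1) => by
      have h1 := ChT_coeff_pred k
      have h0 := ChT_coeff_gt k (k+1) (by omega)
      rw [ChT_ss]
      simp [coeff_sub, mul_assoc, coeff_C_mul, coeff_X_mul, h1, h0]

theorem ChV_coeff_ge : ∀ (k j : ℕ), k ≤ j → (ChV k).coeff j = 0
  | 0, j, h => by simp [ChV]
  | 1, j, h => by simp [ChV, coeff_one]; omega
  | (k+2), j, h => by
      obtain ⟨j', rfl⟩ : ∃ j', j = j' + 1 := ⟨j - 1, by omega⟩
      have h1 := ChV_coeff_ge (k+1) j' (by omega)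
      have h0 := ChV_coeff_ge k (j'+1) (by omega)
      rw [ChV_ss]
      simp [coeff_sub, mul_assoc, coeff_C_mul, coeff_X_mul, h1, h0]

theorem ChV_coeff_self : ∀ (k : ℕ), (ChV (k+1)).coeff k = 2^k
  | 0 => by simp [ChV]
  | (k+1) => by
      have h1 := ChV_coeff_self k
      have h0 := ChV_coeff_ge k (k+1) (by omega)
      rw [ChV_ss]
      simp [coeff_sub, mul_assoc, coeff_C_mul, coeff_X_mul, h1, h0]
      ring

theorem ChV_coeff_pred : ∀ (k : ℕ), (ChV (k+2)).coeff k = 0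
  | 0 => by
      rw [ChV_ss]
      simp [ChV]
  | (k+1) => by
      have h1 := ChV_coeff_pred k
      have h0 := ChV_coeff_ge (k+1) (k+1) le_rfl
      rw [ChV_ss]
      simp [coeff_sub, mul_assoc, coeff_C_mul, coeff_X_mul, h1, h0]

theorem Sq_ChT (r : ℂ) (hr0 : r ≠ 0) (k : ℕ) (w : ℂ) (hw : w ≠ 0) :
    Sq r (pl (ChT k)) w = al r k * (ChT k).eval (latX w) := by
  have hT := ChT_eval k w hw
  unfold Sq pl
  rw [ChT_eval k (r*w) (mul_ne_zero hr0 hw), ChT_eval k (w/r) (div_ne_zero hw hr0),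
    hT, al]
  simp only [mul_inv, mul_pow, div_eq_mul_inv, inv_pow, inv_inv]
  ring

theorem Dq_ChT (r : ℂ) (hr0 : r ≠ 0) (hr2 : r^2 ≠ 1) (k : ℕ) (w : ℂ)
    (hw : w ≠ 0) (hw2 : w^2 ≠ 1) :
    Dq r (pl (ChT k)) w = gam r k * (ChV k).eval (latX w) := by
  have hrne : r - r⁻¹ ≠ 0 := sub_inv_ne r hr0 hr2
  have hwne : w - w⁻¹ ≠ 0 := sub_inv_ne w hw hw2
  have hd : latX (r*w) - latX (w/r) = (r - r⁻¹) * (w - w⁻¹) / 2 := by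
    simp only [latX]
    field_simp
    ring
  have hE : (ChV k).eval (latX w) = (w^k - w⁻¹^k)/(w - w⁻¹) := by
    rw [eq_div_iff hwne, mul_comm]
    exact ChV_eval k w hw
  have hnum : (ChT k).eval (latX (r*w)) - (ChT k).eval (latX (w/r))
      = (r^k - r⁻¹^k) * (w^k - w⁻¹^k) / 2 := by
    rw [ChT_eval k (r*w) (mul_ne_zero hr0 hw), ChT_eval k (w/r) (div_ne_zero hw hr0)]
    simp only [mul_inv, mul_pow, div_eq_mul_inv, inv_pow, inv_inv]
    ring
  unfold Dq pl
  rw [hd, hnum, hE, gam]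
  generalize r^k - r⁻¹^k = S
  generalize w^k - w⁻¹^k = T
  rw [div_div_div_comm, div_self (two_ne_zero (α := ℂ)), div_one, div_mul_div_comm]

theorem Sq_lin (r c : ℂ) (u v : ℂ → ℂ) (w : ℂ) :
    Sq r (fun x => c * u x + v x) w = c * Sq r u w + Sq r v w := by
  unfold Sq; ring

theorem Dq_lin (r c : ℂ) (u v : ℂ → ℂ) (w : ℂ) :
    Dq r (fun x => c * u x + v x) w = c * Dq r u w + Dq r v w := by
  unfold Dq
  simp only
  ring

theorem EX (r : ℂ) (hr0 : r ≠ 0) (hr2 : r^2 ≠ 1) :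
    ∀ (m : ℕ) (p : Polynomial ℂ), p.natDegree ≤ m →
    ∃ Sp Dp : Polynomial ℂ,
      (∀ w : ℂ, w ≠ 0 → Sq r (pl p) w = Sp.eval (latX w)) ∧
      (∀ w : ℂ, w ≠ 0 → w^2 ≠ 1 → Dq r (pl p) w = Dp.eval (latX w)) ∧
      (∀ k, m < k → Sp.coeff k = 0) ∧
      Sp.coeff m = al r m * p.coeff m ∧
      (∀ j, j + 1 = m → Sp.coeff j = al r j * p.coeff j) ∧
      (∀ k, m ≤ k → Dp.coeff k = 0) ∧
      (∀ j, j + 1 = m → Dp.coeff j = gam r m * p.coeff m) ∧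
      (∀ j, j + 2 = m → Dp.coeff j = gam r (j+1) * p.coeff (j+1)) := by
  intro m
  induction m with
  | zero =>
      intro p hp
      have hpC : p = C (p.coeff 0) := (Polynomial.eq_C_of_natDegree_le_zero hp)
      refine ⟨C (p.coeff 0), 0, ?_, ?_, ?_, ?_, ?_, ?_, ?_, ?_⟩
      · intro w hw
        rw [hpC]
        unfold Sq pl
        simp
      · intro w hw hw2
        rw [hpC]
        unfold Dq pl
        simp
      · intro k hk
        rw [coeff_C, if_neg (by omega)]
      · rw [coeff_C, if_pos rfl, al]
        simp
      · intro j hj; omega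
      · intro k hk; simp
      · intro j hj; omega
      · intro j hj; omega
  | succ m ih =>
      intro p hp
      set cc := p.coeff (m+1) / 2^m with hcc
      set q := p - C cc * ChT (m+1) with hq
      have hqc : ∀ j, q.coeff j = p.coeff j - cc * (ChT (m+1)).coeff j := by
        intro j; simp [hq, coeff_sub, coeff_C_mul]
      have hqdeg : q.natDegree ≤ m := by
        apply Polynomial.natDegree_le_iff_coeff_eq_zero.mpr
        intro j hj
        rcases Nat.lt_or_ge j (m+2) with hj2 | hj2
        · have hj1 : j = m + 1 := by omega
          rw [hj1, hqc, ChT_coeff_self m, hcc]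
          field_simp
          ring
        · rw [hqc, ChT_coeff_gt (m+1) j (by omega),
            Polynomial.coeff_eq_zero_of_natDegree_lt (by omega)]
          ring
      obtain ⟨Sp', Dp', hS', hD', hSgt', hSself', hSpred', hDge', hDself', hDpred'⟩ := ih q hqdeg
      have hsplit : pl p = fun x => cc * pl (ChT (m+1)) x + pl q x := by
        funext x
        simp only [pl, hq, eval_sub, eval_mul, eval_C]
        ring
      refine ⟨C (cc * al r (m+1)) * ChT (m+1) + Sp',
              C (cc * gam r (m+1)) * ChV (m+1) + Dp', ?_, ?_, ?_, ?_, ?_, ?_, ?_, ?_⟩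
      · intro w hw
        rw [hsplit, Sq_lin, hS' w hw, Sq_ChT r hr0 (m+1) w hw]
        simp only [eval_add, eval_mul, eval_C]
        ring
      · intro w hw hw2
        rw [hsplit, Dq_lin, hD' w hw hw2, Dq_ChT r hr0 hr2 (m+1) w hw hw2]
        simp only [eval_add, eval_mul, eval_C]
        ring
      · intro k hk
        rw [coeff_add, coeff_C_mul, ChT_coeff_gt (m+1) k (by omega), hSgt' k (by omega)]
        ring
      · rw [coeff_add, coeff_C_mul, ChT_coeff_self m, hSgt' (m+1) (by omega), hcc]
        have h2 : (2:ℂ)^m ≠ 0 := pow_ne_zero m two_ne_zero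
        field_simp
        ring
      · intro j hj
        have hj' : j = m := by omega
        rw [hj', coeff_add, coeff_C_mul, ChT_coeff_pred m, hSself', hqc, ChT_coeff_pred m]
        ring
      · intro k hk
        rw [coeff_add, coeff_C_mul, ChV_coeff_ge (m+1) k (by omega), hDge' k (by omega)]
        ring
      · intro j hj
        have hj' : j = m := by omega
        rw [hj', coeff_add, coeff_C_mul, ChV_coeff_self m, hDge' m le_rfl, hcc]
        have h2 : (2:ℂ)^m ≠ 0 := pow_ne_zero m two_ne_zero
        field_simp
        ring
      · intro j hj
        have hj' : j + 1 = m := by omega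
        have hjv : j = m - 1 := by omega
        rw [coeff_add, coeff_C_mul]
        have hVp : (ChV (m+1)).coeff j = 0 := by
          obtain ⟨j', rfl⟩ : ∃ j', m = j' + 1 := ⟨m - 1, by omega⟩
          have : j = j' := by omega
          subst this
          exact ChV_coeff_pred j
        rw [hVp, hDself' j hj', hqc, ChT_coeff_pred m, hj']
        ring
end
lemma natc_ne (k : ℕ) : ((k:ℂ)+2) ≠ 0 := by
  have : (((k+2 : ℕ)):ℂ) ≠ 0 := Nat.cast_ne_zero.mpr (by omega)
  push_cast at this
  exact this

lemma natc_sq (k : ℕ) : ((k:ℂ)+2)^2 ≠ 1 := by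
  have h4 : (2:ℕ)^2 ≤ (k+2)^2 := Nat.pow_le_pow_left (by omega) 2
  intro hh
  have h1 : (((k+2)^2 : ℕ):ℂ) = ((1:ℕ):ℂ) := by push_cast; linear_combination hh
  have h2 := Nat.cast_inj (R := ℂ) |>.mp h1
  omega

theorem poly_eq_of_eval (p : Polynomial ℂ)
    (h : ∀ w : ℂ, w ≠ 0 → w^2 ≠ 1 → p.eval (latX w) = 0) : p = 0 := by
  apply Polynomial.eq_zero_of_infinite_isRoot
  apply Set.infinite_of_injective_forall_mem
    (f := fun k : ℕ => latX ((k:ℂ)+2))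
  · intro k l hkl
    simp only [latX] at hkl
    have hk := natc_ne k
    have hl := natc_ne l
    have key : (((k:ℂ)+2) - ((l:ℂ)+2)) * ((((k:ℂ)+2))*(((l:ℂ)+2)) - 1) = 0 := by
      field_simp at hkl
      linear_combination hkl
    rcases mul_eq_zero.mp key with h1 | h2
    · have : (k:ℂ) = (l:ℂ) := by linear_combination h1
      exact_mod_cast this
    · exfalso
      have : (((k+2)*(l+2) : ℕ) : ℂ) = ((1:ℕ):ℂ) := by push_cast; linear_combination h2
      rw [Nat.cast_inj] at this
      have h4 : 2*2 ≤ (k+2)*(l+2) :=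
        Nat.mul_le_mul (show 2 ≤ k+2 by omega) (show 2 ≤ l+2 by omega)
      omega
  · intro k
    exact h _ (natc_ne k) (natc_sq k)


theorem coeff_comparison_bn (q : ℝ) (hq0 : 0 < q) (hq1 : q < 1)
    (r : ℂ) (hr : r = (Real.sqrt q : ℂ))
    (α : ℂ) (hα : α = (r + r⁻¹) / 2)
    (a b c : ℂ) (A Bb Cc B Cn : ℕ → ℂ)
    (P : ℕ → Polynomial ℂ) (Pprev : ℕ → Polynomial ℂ)
    (hmonic : ∀ n, (P n).Monic) (hdeg : ∀ n, (P n).natDegree = n)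
    (hP0 : P 0 = 1)
    (hPprev0 : Pprev 0 = 0) (hPprevS : ∀ n, Pprev (n + 1) = P n)
    (hCn : ∀ n, Cn n ≠ 0)
    (hrec : ∀ n, P (n + 1) =
      (Polynomial.X - Polynomial.C (B n)) * P n - Polynomial.C (Cn n) * Pprev n)
    (heq : ∀ n, ∀ w : ℂ, w ≠ 0 → w ^ 2 ≠ 1 →
      (a * latX w ^ 2 + b * latX w + c) * Dq r (pl (P n)) w =
        A n * Sq r (pl (P (n + 1))) w + Bb n * Sq r (pl (P n)) w
          + Cc n * Sq r (pl (Pprev n)) w)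
    (hA : ∀ n, A n = a * gam r n / al r (n + 1)) :
    ∀ n : ℕ, al r n * al r (n + 1) * Bb n =
      gam r n * (a * al r n * B n + b * al r (n + 1))
        + a * α * ∑ j ∈ Finset.range n, B j := by
  have hs : 0 < Real.sqrt q := Real.sqrt_pos.mpr hq0
  have hr0 : r ≠ 0 := by
    rw [hr]; exact_mod_cast hs.ne'
  have hr2 : r^2 ≠ 1 := by
    rw [hr, ← Complex.ofReal_pow, Real.sq_sqrt hq0.le]
    exact_mod_cast hq1.ne
  have hrne : r - r⁻¹ ≠ 0 := sub_inv_ne r hr0 hr2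
  have halne : ∀ k, al r k ≠ 0 := by
    intro k
    rw [al, hr, ← Complex.ofReal_inv, ← Complex.ofReal_pow, ← Complex.ofReal_pow,
      ← Complex.ofReal_add]
    refine div_ne_zero (Complex.ofReal_ne_zero.mpr ?_) two_ne_zero
    positivity
  have hg0 : gam r 0 = 0 := by rw [gam]; simp
  have hlead : ∀ n, (P n).coeff n = 1 := by
    intro n
    have h := (hmonic n).coeff_natDegree
    rwa [hdeg n] at h
  have hf : ∀ n, (P (n+1)).coeff n = -∑ j ∈ Finset.range (n+1), B j := by
    intro n
    induction n with
    | zero =>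
        rw [hrec 0, hP0, hPprev0]
        simp
    | succ k ihk =>
        rw [hrec (k+1), hPprevS k]
        have hz : (P k).coeff (k+1) = 0 :=
          Polynomial.coeff_eq_zero_of_natDegree_lt (by rw [hdeg]; omega)
        simp only [coeff_sub, sub_mul, coeff_X_mul, coeff_C_mul, hlead (k+1), ihk, hz,
          Finset.sum_range_succ]
        ring
  intro n
  cases n with
  | zero =>
      have h0 := heq 0 2 (by norm_num) (by norm_num)
      have hD0 : Dq r (pl (P 0)) 2 = 0 := by
        rw [hP0]; unfold Dq pl; simp
      have hS0 : Sq r (pl (P 0)) 2 = 1 := by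
        rw [hP0]; unfold Sq pl; simp
      have hSp0 : Sq r (pl (Pprev 0)) 2 = 0 := by
        rw [hPprev0]; unfold Sq pl; simp
      have hA0 : A 0 = 0 := by rw [hA 0, hg0]; simp
      rw [hD0, hS0, hSp0, hA0] at h0
      have hBb0 : Bb 0 = 0 := by linear_combination -h0
      rw [hBb0, hg0]
      simp
  | succ m =>
      obtain ⟨Spn, Dpn, hSn, hDn, hSngt, hSnself, hSnpred, hDge, hDself, hDpred⟩ :=
        EX r hr0 hr2 (m+1) (P (m+1)) (le_of_eq (hdeg (m+1)))
      obtain ⟨Sp1, Dp1, hS1, hD1e, hS1gt, hS1self, hS1pred, _, _, _⟩ :=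
        EX r hr0 hr2 (m+2) (P (m+2)) (le_of_eq (hdeg (m+2)))
      obtain ⟨Spp, Dpp, hSp, hDpe, hSpgt, hSpself, hSppred, _, _, _⟩ :=
        EX r hr0 hr2 (m+1) (Pprev (m+1)) (by rw [hPprevS m, hdeg m]; omega)
      have hQ : (C a * X^2 + C b * X + C c) * Dpn
          = C (A (m+1)) * Sp1 + C (Bb (m+1)) * Spn + C (Cc (m+1)) * Spp := by
        rw [← sub_eq_zero]
        apply poly_eq_of_eval
        intro w hw hw2
        have h := heq (m+1) w hw hw2
        rw [hDn w hw hw2, hS1 w hw, hSn w hw, hSp w hw] at h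
        simp only [eval_sub, eval_add, eval_mul, eval_C, eval_X, eval_pow]
        linear_combination h
      have hLHS : ((C a * X^2 + C b * X + C c) * Dpn).coeff (m+1)
          = a * (gam r m * (P (m+1)).coeff m) + b * gam r (m+1) := by
        rw [show (C a * X^2 + C b * X + C c) * Dpn
          = C a * (Dpn * X^2) + (C b * (Dpn * X) + C c * Dpn) by ring]
        rw [coeff_add, coeff_add, coeff_C_mul, coeff_C_mul, coeff_C_mul]
        have hDX : (Dpn * X).coeff (m+1) = Dpn.coeff m := by
          rw [show Dpn * X = Dpn * X^1 by ring]
          exact Polynomial.coeff_mul_X_pow Dpn 1 m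
        have hDX2 : (Dpn * X^2).coeff (m+1) = gam r m * (P (m+1)).coeff m := by
          cases m with
          | zero =>
              rw [Polynomial.coeff_mul_X_pow', if_neg (by omega), hg0, zero_mul]
          | succ m' =>
              show (Dpn * X^2).coeff (m' + 2) = _
              rw [Polynomial.coeff_mul_X_pow Dpn 2 m', hDpred m' rfl]
        rw [hDX, hDX2, hDself m rfl, hlead (m+1), mul_one, hDge (m+1) le_rfl, mul_zero, add_zero]
        try ring
      have hRHS : (C (A (m+1)) * Sp1 + C (Bb (m+1)) * Spn + C (Cc (m+1)) * Spp).coeff (m+1)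
          = A (m+1) * (al r (m+1) * (P (m+2)).coeff (m+1)) + Bb (m+1) * al r (m+1) := by
        rw [coeff_add, coeff_add, coeff_C_mul, coeff_C_mul, coeff_C_mul]
        rw [hS1pred (m+1) rfl, hSnself, hlead (m+1), mul_one, hSpself]
        have hzz : (Pprev (m+1)).coeff (m+1) = 0 := by
          rw [hPprevS m]
          exact Polynomial.coeff_eq_zero_of_natDegree_lt (by rw [hdeg]; omega)
        rw [hzz, mul_zero, mul_zero, add_zero]
      have keyEq : a * (gam r m * (P (m+1)).coeff m) + b * gam r (m+1)
          = A (m+1) * (al r (m+1) * (P (m+2)).coeff (m+1)) + Bb (m+1) * al r (m+1) := by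
        rw [← hLHS, ← hRHS, hQ]
      set S := ∑ j ∈ Finset.range (m+1), B j with hS
      have hFm : (P (m+1)).coeff m = -S := hf m
      have hF1 : (P (m+2)).coeff (m+1) = -(S + B (m+1)) := by
        rw [hf (m+1), Finset.sum_range_succ]
      rw [hFm, hF1, hA (m+1)] at keyEq
      have hT2 : al r (m+1+1) ≠ 0 := halne (m+2)
      have hr21 : r^2 - 1 ≠ 0 := sub_ne_zero.mpr hr2
      have id1 : gam r (m+1) * al r (m+1) - gam r m * al r (m+2) = α := by
        have hmul : r^m * r⁻¹^m = 1 := by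
          rw [← mul_pow, mul_inv_cancel₀ hr0, one_pow]
        rw [gam, gam, al, al, hα]
        rw [div_mul_div_comm, div_mul_div_comm, div_sub_div_same,
          div_eq_div_iff (mul_ne_zero hrne two_ne_zero) two_ne_zero]
        linear_combination (2*(r^2 - r⁻¹^2)) * hmul
      have keyEq' : (a * (gam r m * (-S)) + b * gam r (m+1)) * al r (m+2)
          = a * gam r (m+1) * (al r (m+1) * (-(S + B (m+1))))
            + Bb (m+1) * al r (m+1) * al r (m+2) := by
        field_simp at keyEq
        linear_combination keyEq
      linear_combination (-1 : ℂ) * keyEq' + a * S * id1
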